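/- Let F be a reducing family of degree λ for a set B connected to 1, with Λ(γ(f)) = Λ(f) for all f ∈ F, and suppose the truncated multiplication operators commute: M_{j,λ} ∘ M_{i,λ⁻} = M_{i,λ} ∘ M_{j,λ⁻} for all 1 ≤ i, j ≤ n. Then π_F extends to a K-linear projection π^e_F : K[x]_λ → ⟨B⟩_λ whose kernel is F_⟨λ⟩, the span of the monomial multiples x^α f_i of elements of F of degree ≤ λ. Consequently K[x]_λ = ⟨B⟩_λ ⊕ F_⟨λ⟩. -/

import Mathlib

open MvPolynomial
open scoped Classical

abbrev Mon (n : ℕ) := Fin n →₀ ℕ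

def prolong {n : ℕ} (B : Set (Mon n)) : Set (Mon n) :=
  B ∪ ⋃ i : Fin n, (fun m => Finsupp.single i 1 + m) '' B

def border {n : ℕ} (B : Set (Mon n)) : Set (Mon n) := prolong B \ B

noncomputable def varsSum {n : ℕ} (L : List (Fin n)) : Mon n :=
  (L.map fun i => Finsupp.single i 1).sum

def ConnectedTo1 {n : ℕ} (B : Set (Mon n)) : Prop :=
  0 ∈ B ∧ ∀ m ∈ B, ∃ L : List (Fin n), varsSum L = m ∧
    ∀ L' : List (Fin n), L' <+: L → varsSum L' ∈ B

def degSum {n : ℕ} (m : Mon n) : ℕ := m.sum fun _ e => e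
noncomputable def spanMon {n : ℕ} (K : Type) [Field K] (B : Set (Mon n)) :
    Submodule K (MvPolynomial (Fin n) K) :=
  Submodule.span K ((fun m => (monomial m (1 : K) : MvPolynomial (Fin n) K)) '' B)

noncomputable def piF {n : ℕ} {K : Type} [Field K] (B H : Set (Mon n))
    (ρ : Mon n → MvPolynomial (Fin n) K) (p : MvPolynomial (Fin n) K) :
    MvPolynomial (Fin n) K :=
  p.support.sum fun m =>
    if m ∈ B then monomial m (p.coeff m)
    else if m ∈ H then p.coeff m • ρ m else 0

noncomputable def redList {n : ℕ} {K : Type} [Field K] (B H : Set (Mon n))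
    (ρ : Mon n → MvPolynomial (Fin n) K) : List (Fin n) → MvPolynomial (Fin n) K
  | [] => 1
  | i :: L => piF B H ρ (X i * redList B H ρ L)

def DefinedOn {n : ℕ} {K : Type} [Field K] (B H : Set (Mon n))
    (p : MvPolynomial (Fin n) K) : Prop :=
  ↑p.support ⊆ B ∪ H

def RedDefined {n : ℕ} {K : Type} [Field K] (B H : Set (Mon n))
    (ρ : Mon n → MvPolynomial (Fin n) K) : List (Fin n) → Prop
  | [] => True
  | i :: L => RedDefined B H ρ L ∧ DefinedOn B H (X i * redList B H ρ L)

def Eset {n : ℕ} {K : Type} [Field K] (B H : Set (Mon n))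
    (ρ : Mon n → MvPolynomial (Fin n) K) : Set (Mon n) :=
  { m | ∀ L : List (Fin n), varsSum L = m → RedDefined B H ρ L }

/-- The span F_⟨λ⟩ of the monomial multiples of the rewriting family of degree ≤ λ. -/
noncomputable def Fspan {n : ℕ} (K : Type) [Field K] {Λ : Type}
    [AddCommMonoid Λ] [LinearOrder Λ] [IsOrderedAddMonoid Λ] (deg : Mon n → Λ) (lam : Λ) (H : Set (Mon n))
    (ρ : Mon n → MvPolynomial (Fin n) K) : Submodule K (MvPolynomial (Fin n) K) :=
  Submodule.span K { q | ∃ α : Mon n, ∃ h ∈ H, deg (α + h) ≤ lam ∧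
    q = (monomial α (1 : K)) * (monomial h 1 - ρ h) }

section Dev

variable {n : ℕ} {K : Type} [Field K]

/-! ### basic linear algebra of support sums -/

lemma sum_supp_subset (G : Mon n → MvPolynomial (Fin n) K)
    (p : MvPolynomial (Fin n) K) {s : Finset (Mon n)} (h : p.support ⊆ s) :
    ∑ m ∈ p.support, p.coeff m • G m = ∑ m ∈ s, p.coeff m • G m := by
  refine Finset.sum_subset h ?_
  intro m _ hm
  rw [MvPolynomial.notMem_support_iff.mp hm, zero_smul]

noncomputable def liftMon (G : Mon n → MvPolynomial (Fin n) K) :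
    MvPolynomial (Fin n) K →ₗ[K] MvPolynomial (Fin n) K where
  toFun p := ∑ m ∈ p.support, p.coeff m • G m
  map_add' p q := by
    rw [sum_supp_subset G (p + q) MvPolynomial.support_add,
      sum_supp_subset G p Finset.subset_union_left,
      sum_supp_subset G q Finset.subset_union_right, ← Finset.sum_add_distrib]
    exact Finset.sum_congr rfl fun m _ => by rw [MvPolynomial.coeff_add, add_smul]
  map_smul' c p := by
    rw [sum_supp_subset G (c • p) MvPolynomial.support_smul, RingHom.id_apply, Finset.smul_sum]
    exact Finset.sum_congr rfl fun m _ => by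
      rw [MvPolynomial.coeff_smul, smul_eq_mul, mul_smul]

lemma liftMon_apply (G : Mon n → MvPolynomial (Fin n) K) (p : MvPolynomial (Fin n) K) :
    liftMon G p = ∑ m ∈ p.support, p.coeff m • G m := rfl

lemma smul_mono_one (m : Mon n) (c : K) :
    c • (monomial m (1 : K)) = monomial m c := by
  rw [smul_monomial, smul_eq_mul, mul_one]

lemma liftMon_monomial (G : Mon n → MvPolynomial (Fin n) K) (m : Mon n) (c : K) :
    liftMon G (monomial m c) = c • G m := by
  by_cases hc : c = 0
  · subst hc
    rw [map_zero (monomial m), map_zero (liftMon G), zero_smul]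
  · rw [liftMon_apply, support_monomial, if_neg hc, Finset.sum_singleton,
      coeff_monomial, if_pos rfl]

lemma liftMon_supp (G : Mon n → MvPolynomial (Fin n) K) (p : MvPolynomial (Fin n) K)
    {γ : Mon n} (hγ : γ ∈ (liftMon G p).support) :
    ∃ m ∈ p.support, γ ∈ (G m).support := by
  rw [liftMon_apply] at hγ
  obtain ⟨m, hm, hγ'⟩ := Finset.mem_biUnion.mp (MvPolynomial.support_sum hγ)
  exact ⟨m, hm, MvPolynomial.support_smul hγ'⟩

/-! ### gfun and piF -/

noncomputable def gfun (B H : Set (Mon n)) (ρ : Mon n → MvPolynomial (Fin n) K) (m : Mon n) :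
    MvPolynomial (Fin n) K :=
  if m ∈ B then monomial m 1 else if m ∈ H then ρ m else 0

lemma piF_eq (B H : Set (Mon n)) (ρ : Mon n → MvPolynomial (Fin n) K)
    (p : MvPolynomial (Fin n) K) :
    piF B H ρ p = liftMon (gfun B H ρ) p := by
  rw [liftMon_apply, piF]
  refine Finset.sum_congr rfl fun m _ => ?_
  unfold gfun
  split_ifs with h1 h2
  · rw [smul_mono_one]
  · rfl
  · rw [smul_zero]

lemma X_mul_mono (i : Fin n) (m : Mon n) (c : K) :
    X i * monomial m c = monomial (Finsupp.single i 1 + m) c := by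
  rw [X, monomial_mul, one_mul]

noncomputable def RL (B H : Set (Mon n)) (ρ : Mon n → MvPolynomial (Fin n) K) (i : Fin n) :
    MvPolynomial (Fin n) K →ₗ[K] MvPolynomial (Fin n) K :=
  (liftMon (gfun B H ρ)).comp (LinearMap.mulLeft K (X i))

lemma RL_apply (B H : Set (Mon n)) (ρ : Mon n → MvPolynomial (Fin n) K) (i : Fin n)
    (p : MvPolynomial (Fin n) K) : RL B H ρ i p = piF B H ρ (X i * p) := by
  rw [piF_eq]; rfl

lemma RL_monomial (B H : Set (Mon n)) (ρ : Mon n → MvPolynomial (Fin n) K) (i : Fin n)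
    (m : Mon n) (c : K) :
    RL B H ρ i (monomial m c) = c • gfun B H ρ (Finsupp.single i 1 + m) := by
  have : RL B H ρ i (monomial m c) = liftMon (gfun B H ρ) (X i * monomial m c) := rfl
  rw [this, X_mul_mono, liftMon_monomial]

noncomputable def redL (B H : Set (Mon n)) (ρ : Mon n → MvPolynomial (Fin n) K) :
    List (Fin n) → (MvPolynomial (Fin n) K →ₗ[K] MvPolynomial (Fin n) K)
  | [] => LinearMap.id
  | i :: L => (RL B H ρ i).comp (redL B H ρ L)

lemma redL_nil (B H : Set (Mon n)) (ρ : Mon n → MvPolynomial (Fin n) K)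
    (p : MvPolynomial (Fin n) K) : redL B H ρ [] p = p := rfl

lemma redL_cons (B H : Set (Mon n)) (ρ : Mon n → MvPolynomial (Fin n) K) (i : Fin n)
    (L : List (Fin n)) (p : MvPolynomial (Fin n) K) :
    redL B H ρ (i :: L) p = RL B H ρ i (redL B H ρ L p) := rfl

lemma redL_append (B H : Set (Mon n)) (ρ : Mon n → MvPolynomial (Fin n) K)
    (L1 L2 : List (Fin n)) (p : MvPolynomial (Fin n) K) :
    redL B H ρ (L1 ++ L2) p = redL B H ρ L1 (redL B H ρ L2 p) := by
  induction L1 with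
  | nil => rfl
  | cons i L ih => rw [List.cons_append, redL_cons, redL_cons, ih]

/-! ### varsSum lemmas -/

lemma varsSum_nil : varsSum ([] : List (Fin n)) = 0 := rfl

lemma varsSum_cons (i : Fin n) (L : List (Fin n)) :
    varsSum (i :: L) = Finsupp.single i 1 + varsSum L := by
  simp [varsSum]

lemma varsSum_append (L1 L2 : List (Fin n)) :
    varsSum (L1 ++ L2) = varsSum L1 + varsSum L2 := by
  simp [varsSum]

lemma varsSum_count (L : List (Fin n)) (j : Fin n) : varsSum L j = L.count j := by
  induction L with
  | nil => simp [varsSum]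
  | cons i L ih =>
      rw [varsSum_cons, Finsupp.add_apply, ih, Finsupp.single_apply, List.count_cons]
      by_cases h : j = i
      · subst h; simp [Nat.add_comm]
      · simp [h, Ne.symm h]

lemma varsSum_perm {L L' : List (Fin n)} (h : L.Perm L') : varsSum L = varsSum L' :=
  (h.map _).sum_eq

lemma perm_of_varsSum_eq {L L' : List (Fin n)} (h : varsSum L = varsSum L') : L.Perm L' :=
  List.perm_iff_count.mpr fun a => by rw [← varsSum_count, ← varsSum_count, h]

noncomputable def toL (m : Mon n) : List (Fin n) := m.toMultiset.toList

lemma varsSum_toL (m : Mon n) : varsSum (toL m) = m := by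
  ext j
  rw [varsSum_count, toL, ← Multiset.coe_count, Multiset.coe_toList,
    Finsupp.count_toMultiset]

lemma supp_one : (1 : MvPolynomial (Fin n) K).support = {0} := by
  rw [← C_1, ← monomial_zero', support_monomial, if_neg one_ne_zero]

end Dev

section Main

variable {n : ℕ} {K : Type} [Field K] {Λ : Type} [AddCommMonoid Λ] [LinearOrder Λ] [IsOrderedAddMonoid Λ]
variable (deg : Mon n → Λ) (lam : Λ) (B H : Set (Mon n)) (ρ : Mon n → MvPolynomial (Fin n) K)

lemma deg_mono (hredgrad : ∀ a b : Mon n, a ≤ b → a ≠ b → deg a < deg b)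
    {a b : Mon n} (h : a ≤ b) : deg a ≤ deg b := by
  rcases eq_or_ne a b with rfl | hne
  · exact le_refl _
  · exact (hredgrad a b h hne).le

lemma g_supp (hH : H ⊆ border B) (hρ : ∀ h ∈ H, ↑(ρ h).support ⊆ B)
    (hredfam : ∀ m ∈ border B, deg m ≤ lam → m ∈ H)
    (hlead : ∀ h ∈ H, ∀ m ∈ (ρ h).support, deg m ≤ deg h)
    {m : Mon n} (hm : m ∈ prolong B) (hml : deg m ≤ lam) :
    ↑(gfun B H ρ m).support ⊆ B ∧ ∀ γ ∈ (gfun B H ρ m).support, deg γ ≤ deg m := by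
  by_cases hBm : m ∈ B
  · simp only [gfun, if_pos hBm]
    rw [support_monomial, if_neg (one_ne_zero (α := K))]
    constructor
    · intro γ hγ
      rw [Finset.coe_singleton, Set.mem_singleton_iff] at hγ
      subst hγ; exact hBm
    · intro γ hγ
      rw [Finset.mem_singleton] at hγ; subst hγ; exact le_refl _
  · have hbor : m ∈ border B := ⟨hm, hBm⟩
    have hHm : m ∈ H := hredfam m hbor hml
    simp only [gfun, if_neg hBm, if_pos hHm]
    exact ⟨hρ m hHm, fun γ hγ => hlead m hHm γ hγ⟩

lemma RL_repr (i : Fin n) (q : MvPolynomial (Fin n) K) :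
    RL B H ρ i q = ∑ β ∈ q.support, q.coeff β • gfun B H ρ (Finsupp.single i 1 + β) := by
  conv_lhs => rw [as_sum q]
  rw [map_sum]
  exact Finset.sum_congr rfl fun β _ => RL_monomial B H ρ i β _

lemma RL_supp (hH : H ⊆ border B) (hρ : ∀ h ∈ H, ↑(ρ h).support ⊆ B)
    (hredfam : ∀ m ∈ border B, deg m ≤ lam → m ∈ H)
    (hlead : ∀ h ∈ H, ∀ m ∈ (ρ h).support, deg m ≤ deg h)
    {i : Fin n} {q : MvPolynomial (Fin n) K}
    (hq : ↑q.support ⊆ B) (hd : ∀ β ∈ q.support, deg (Finsupp.single i 1 + β) ≤ lam) :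
    ↑(RL B H ρ i q).support ⊆ B ∧
      ∀ γ ∈ (RL B H ρ i q).support, ∃ β ∈ q.support, deg γ ≤ deg (Finsupp.single i 1 + β) := by
  have hmem : ∀ γ ∈ (RL B H ρ i q).support,
      ∃ β ∈ q.support, γ ∈ (gfun B H ρ (Finsupp.single i 1 + β)).support := by
    intro γ hγ
    rw [RL_repr] at hγ
    obtain ⟨β, hβ, hγ'⟩ := Finset.mem_biUnion.mp (MvPolynomial.support_sum hγ)
    exact ⟨β, hβ, MvPolynomial.support_smul hγ'⟩
  have hpro : ∀ β ∈ q.support, Finsupp.single i 1 + β ∈ prolong B := by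
    intro β hβ
    exact Or.inr (Set.mem_iUnion.mpr ⟨i, ⟨β, hq hβ, rfl⟩⟩)
  constructor
  · intro γ hγ
    obtain ⟨β, hβ, hγ'⟩ := hmem γ hγ
    exact (g_supp deg lam B H ρ hH hρ hredfam hlead (hpro β hβ) (hd β hβ)).1 hγ'
  · intro γ hγ
    obtain ⟨β, hβ, hγ'⟩ := hmem γ hγ
    exact ⟨β, hβ, (g_supp deg lam B H ρ hH hρ hredfam hlead (hpro β hβ) (hd β hβ)).2 γ hγ'⟩

lemma redL_key (hdeg : ∀ a b : Mon n, deg (a + b) = deg a + deg b)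
    (hredgrad : ∀ a b : Mon n, a ≤ b → a ≠ b → deg a < deg b)
    (hH : H ⊆ border B) (hρ : ∀ h ∈ H, ↑(ρ h).support ⊆ B)
    (hredfam : ∀ m ∈ border B, deg m ≤ lam → m ∈ H)
    (hlead : ∀ h ∈ H, ∀ m ∈ (ρ h).support, deg m ≤ deg h) :
    ∀ (L : List (Fin n)) (q : MvPolynomial (Fin n) K), ↑q.support ⊆ B →
      (∀ β ∈ q.support, deg (varsSum L + β) ≤ lam) →
      ↑(redL B H ρ L q).support ⊆ B ∧
        ∀ γ ∈ (redL B H ρ L q).support, ∃ β ∈ q.support, deg γ ≤ deg (varsSum L + β) := by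
  intro L
  induction L with
  | nil =>
      intro q hq _
      refine ⟨hq, fun γ hγ => ⟨γ, hγ, ?_⟩⟩
      rw [varsSum_nil, zero_add]
  | cons i L ih =>
      intro q hq hd
      have hd' : ∀ β ∈ q.support, deg (varsSum L + β) ≤ lam := by
        intro β hβ
        refine le_trans (deg_mono deg hredgrad ?_) (hd β hβ)
        rw [varsSum_cons, add_assoc]
        exact self_le_add_left _ _
      obtain ⟨hs, hb⟩ := ih q hq hd'
      have hdi : ∀ γ ∈ (redL B H ρ L q).support, deg (Finsupp.single i 1 + γ) ≤ lam := by
        intro γ hγ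
        obtain ⟨β, hβ, hγd⟩ := hb γ hγ
        calc deg (Finsupp.single i 1 + γ) = deg (Finsupp.single i 1) + deg γ := hdeg _ _
          _ ≤ deg (Finsupp.single i 1) + deg (varsSum L + β) := add_le_add_right hγd _
          _ = deg (varsSum (i :: L) + β) := by simp only [varsSum_cons, add_assoc, hdeg]
          _ ≤ lam := hd β hβ
      obtain ⟨hs2, hb2⟩ := RL_supp deg lam B H ρ hH hρ hredfam hlead hs hdi
      refine ⟨hs2, fun γ hγ => ?_⟩
      obtain ⟨γ', hγ', hdγ⟩ := hb2 γ hγ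
      obtain ⟨β, hβ, hdβ⟩ := hb γ' hγ'
      refine ⟨β, hβ, ?_⟩
      calc deg γ ≤ deg (Finsupp.single i 1 + γ') := hdγ
        _ = deg (Finsupp.single i 1) + deg γ' := hdeg _ _
        _ ≤ deg (Finsupp.single i 1) + deg (varsSum L + β) := add_le_add_right hdβ _
        _ = deg (varsSum (i :: L) + β) := by simp only [varsSum_cons, add_assoc, hdeg]

lemma RL_comm' (hcomm : ∀ m ∈ B, ∀ i j : Fin n,
      deg (Finsupp.single i 1 + (Finsupp.single j 1 + m)) ≤ lam →
      piF B H ρ (X i * piF B H ρ (X j * monomial m (1 : K))) =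
      piF B H ρ (X j * piF B H ρ (X i * monomial m (1 : K))))
    {i j : Fin n} {q : MvPolynomial (Fin n) K} (hq : ↑q.support ⊆ B)
    (hd : ∀ β ∈ q.support, deg (Finsupp.single i 1 + (Finsupp.single j 1 + β)) ≤ lam) :
    RL B H ρ i (RL B H ρ j q) = RL B H ρ j (RL B H ρ i q) := by
  conv_lhs => rw [as_sum q]
  conv_rhs => rw [as_sum q]
  rw [map_sum, map_sum, map_sum, map_sum]
  refine Finset.sum_congr rfl fun β hβ => ?_
  rw [← smul_mono_one β (coeff β q), map_smul, map_smul, map_smul, map_smul]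
  congr 1
  simp only [RL_apply]
  exact hcomm β (hq hβ) i j (hd β hβ)

lemma redL_perm (hdeg : ∀ a b : Mon n, deg (a + b) = deg a + deg b)
    (hredgrad : ∀ a b : Mon n, a ≤ b → a ≠ b → deg a < deg b)
    (hH : H ⊆ border B) (hρ : ∀ h ∈ H, ↑(ρ h).support ⊆ B)
    (hredfam : ∀ m ∈ border B, deg m ≤ lam → m ∈ H)
    (hlead : ∀ h ∈ H, ∀ m ∈ (ρ h).support, deg m ≤ deg h)
    (hcomm : ∀ m ∈ B, ∀ i j : Fin n,
      deg (Finsupp.single i 1 + (Finsupp.single j 1 + m)) ≤ lam →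
      piF B H ρ (X i * piF B H ρ (X j * monomial m (1 : K))) =
      piF B H ρ (X j * piF B H ρ (X i * monomial m (1 : K))))
    {L L' : List (Fin n)} (hp : L.Perm L') :
    ∀ q : MvPolynomial (Fin n) K, ↑q.support ⊆ B →
      (∀ β ∈ q.support, deg (varsSum L + β) ≤ lam) →
      redL B H ρ L q = redL B H ρ L' q := by
  induction hp with
  | nil => intro q _ _; rfl
  | cons x hp ih =>
      intro q hq hd
      rw [redL_cons, redL_cons, ih q hq ?_]
      intro β hβ
      refine le_trans (deg_mono deg hredgrad ?_) (hd β hβ)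
      rw [varsSum_cons, add_assoc]
      exact self_le_add_left _ _
  | swap x y l =>
      intro q hq hd
      have hdl : ∀ β ∈ q.support, deg (varsSum l + β) ≤ lam := by
        intro β hβ
        refine le_trans (deg_mono deg hredgrad ?_) (hd β hβ)
        rw [varsSum_cons, varsSum_cons, add_assoc, add_assoc]
        exact le_trans (self_le_add_left _ _) (self_le_add_left _ _)
      obtain ⟨hs, hb⟩ := redL_key deg lam B H ρ hdeg hredgrad hH hρ hredfam hlead l q hq hdl
      rw [redL_cons, redL_cons, redL_cons, redL_cons]
      refine RL_comm' deg lam B H ρ hcomm hs ?_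
      intro γ hγ
      obtain ⟨β, hβ, hdγ⟩ := hb γ hγ
      have hd2 := hd β hβ
      simp only [varsSum_cons, hdeg, add_assoc] at hd2 ⊢
      rw [hdeg] at hdγ
      exact le_trans (add_le_add_right (add_le_add_right hdγ _) _) hd2
  | trans hp1 hp2 ih1 ih2 =>
      intro q hq hd
      rw [ih1 q hq hd, ih2 q hq ?_]
      intro β hβ
      rw [← varsSum_perm hp1]
      exact hd β hβ

lemma redL_conn :
    ∀ L : List (Fin n), (∀ L', L' <+: L → varsSum L' ∈ B) →
      redL B H ρ L.reverse (1 : MvPolynomial (Fin n) K) = monomial (varsSum L) (1 : K) := by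
  intro L
  induction L using List.reverseRecOn with
  | nil =>
      intro _
      rw [List.reverse_nil, redL_nil, varsSum_nil, monomial_zero', C_1]
  | append_singleton M i ih =>
      intro hpre
      have hrev : (M ++ [i]).reverse = i :: M.reverse := by simp
      have hsum : varsSum (M ++ [i]) = Finsupp.single i 1 + varsSum M := by
        rw [varsSum_append, varsSum_cons, varsSum_nil, add_zero, add_comm]
      have hBmem : Finsupp.single i 1 + varsSum M ∈ B := by
        rw [← hsum]; exact hpre _ List.prefix_rfl
      rw [hrev, redL_cons, ih (fun L' h => hpre L' (h.trans (List.prefix_append M [i]))),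
        RL_monomial, one_smul, hsum]
      simp only [gfun, if_pos hBmem]

end Main

section Main2

variable {n : ℕ} {K : Type} [Field K] {Λ : Type} [AddCommMonoid Λ] [LinearOrder Λ] [IsOrderedAddMonoid Λ]
variable (deg : Mon n → Λ) (lam : Λ) (B H : Set (Mon n)) (ρ : Mon n → MvPolynomial (Fin n) K)

noncomputable def NF (m : Mon n) : MvPolynomial (Fin n) K :=
  redL B H ρ (toL m) 1

lemma supp_one_cond (hB0 : (0 : Mon n) ∈ B) :
    ↑(1 : MvPolynomial (Fin n) K).support ⊆ B := by
  rw [supp_one, Finset.coe_singleton, Set.singleton_subset_iff]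
  exact hB0

lemma mem_supp_one {β : Mon n} (h : β ∈ (1 : MvPolynomial (Fin n) K).support) : β = 0 := by
  rw [supp_one, Finset.mem_singleton] at h
  exact h

lemma NF_key (hdeg : ∀ a b : Mon n, deg (a + b) = deg a + deg b)
    (hredgrad : ∀ a b : Mon n, a ≤ b → a ≠ b → deg a < deg b)
    (hB0 : (0 : Mon n) ∈ B)
    (hH : H ⊆ border B) (hρ : ∀ h ∈ H, ↑(ρ h).support ⊆ B)
    (hredfam : ∀ m ∈ border B, deg m ≤ lam → m ∈ H)
    (hlead : ∀ h ∈ H, ∀ m ∈ (ρ h).support, deg m ≤ deg h)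
    {m : Mon n} (hml : deg m ≤ lam) :
    ↑(NF B H ρ m).support ⊆ B ∧ ∀ γ ∈ (NF B H ρ m).support, deg γ ≤ deg m := by
  obtain ⟨h1, h2⟩ := redL_key deg lam B H ρ hdeg hredgrad hH hρ hredfam hlead (toL m) 1
    (supp_one_cond B hB0)
    (fun β hβ => by rw [mem_supp_one hβ, add_zero, varsSum_toL]; exact hml)
  refine ⟨h1, fun γ hγ => ?_⟩
  obtain ⟨β, hβ, hd⟩ := h2 γ hγ
  rw [mem_supp_one hβ, add_zero, varsSum_toL] at hd
  exact hd

lemma NF_B (hdeg : ∀ a b : Mon n, deg (a + b) = deg a + deg b)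
    (hredgrad : ∀ a b : Mon n, a ≤ b → a ≠ b → deg a < deg b)
    (hB : ConnectedTo1 B)
    (hH : H ⊆ border B) (hρ : ∀ h ∈ H, ↑(ρ h).support ⊆ B)
    (hredfam : ∀ m ∈ border B, deg m ≤ lam → m ∈ H)
    (hlead : ∀ h ∈ H, ∀ m ∈ (ρ h).support, deg m ≤ deg h)
    (hcomm : ∀ m ∈ B, ∀ i j : Fin n,
      deg (Finsupp.single i 1 + (Finsupp.single j 1 + m)) ≤ lam →
      piF B H ρ (X i * piF B H ρ (X j * monomial m (1 : K))) =
      piF B H ρ (X j * piF B H ρ (X i * monomial m (1 : K))))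
    {m : Mon n} (hm : m ∈ B) (hml : deg m ≤ lam) :
    NF B H ρ m = monomial m (1 : K) := by
  obtain ⟨L, hL, hpre⟩ := hB.2 m hm
  have hperm : (toL m).Perm L.reverse :=
    perm_of_varsSum_eq (by rw [varsSum_toL, varsSum_perm (List.reverse_perm L), hL])
  have := redL_perm deg lam B H ρ hdeg hredgrad hH hρ hredfam hlead hcomm hperm
    (1 : MvPolynomial (Fin n) K) (supp_one_cond B hB.1)
    (fun β hβ => by rw [mem_supp_one hβ, add_zero, varsSum_toL]; exact hml)
  rw [NF, this, redL_conn B H ρ L hpre, hL]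

lemma RL_defect (hH : H ⊆ border B) {i : Fin n} {q : MvPolynomial (Fin n) K} (c : Mon n)
    (hcond : ∀ γ ∈ q.support, Finsupp.single i 1 + γ ∈ B ∨
      (Finsupp.single i 1 + γ ∈ H ∧ deg (c + (Finsupp.single i 1 + γ)) ≤ lam)) :
    monomial c (1 : K) * (X i * q - RL B H ρ i q) ∈ Fspan K deg lam H ρ := by
  rw [as_sum q]
  rw [Finset.mul_sum, map_sum, ← Finset.sum_sub_distrib, Finset.mul_sum]
  refine Submodule.sum_mem _ fun γ hγ => ?_
  rw [X_mul_mono, RL_monomial, ← smul_mono_one (Finsupp.single i 1 + γ) (coeff γ q),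
    ← smul_sub, mul_smul_comm]
  refine Submodule.smul_mem _ _ ?_
  rcases hcond γ hγ with hb | ⟨hh, hdc⟩
  · simp only [gfun, if_pos hb, sub_self, mul_zero]
    exact Submodule.zero_mem _
  · have hnB : Finsupp.single i 1 + γ ∉ B := (hH hh).2
    simp only [gfun, if_neg hnB, if_pos hh]
    exact Submodule.subset_span ⟨c, Finsupp.single i 1 + γ, hh, hdc, rfl⟩

lemma redL_defect (hdeg : ∀ a b : Mon n, deg (a + b) = deg a + deg b)
    (hredgrad : ∀ a b : Mon n, a ≤ b → a ≠ b → deg a < deg b)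
    (hH : H ⊆ border B) (hρ : ∀ h ∈ H, ↑(ρ h).support ⊆ B)
    (hredfam : ∀ m ∈ border B, deg m ≤ lam → m ∈ H)
    (hlead : ∀ h ∈ H, ∀ m ∈ (ρ h).support, deg m ≤ deg h) :
    ∀ (L : List (Fin n)) (c : Mon n) (q : MvPolynomial (Fin n) K), ↑q.support ⊆ B →
      (∀ β ∈ q.support, deg (c + (varsSum L + β)) ≤ lam) →
      monomial c (1 : K) * (monomial (varsSum L) (1 : K) * q - redL B H ρ L q) ∈
        Fspan K deg lam H ρ := by
  intro L
  induction L with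
  | nil =>
      intro c q _ _
      rw [varsSum_nil, monomial_zero', C_1, one_mul, redL_nil, sub_self, mul_zero]
      exact Submodule.zero_mem _
  | cons i L ih =>
      intro c q hq hd
      have keyeq : monomial c (1 : K) * (monomial (varsSum (i :: L)) (1 : K) * q
            - redL B H ρ (i :: L) q)
          = monomial (c + Finsupp.single i 1) 1 * (monomial (varsSum L) 1 * q - redL B H ρ L q)
            + monomial c 1 * (X i * redL B H ρ L q - RL B H ρ i (redL B H ρ L q)) := by
        rw [redL_cons]
        have h1 : (monomial (varsSum (i :: L)) (1 : K)) = X i * monomial (varsSum L) 1 := by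
          rw [X_mul_mono, varsSum_cons]
        have h2 : (monomial (c + Finsupp.single i 1) (1 : K)) = monomial c 1 * X i := by
          rw [X, monomial_mul, mul_one]
        rw [h1, h2]
        ring
      have hdl : ∀ β ∈ q.support, deg (varsSum L + β) ≤ lam := by
        intro β hβ
        refine le_trans (deg_mono deg hredgrad ?_) (hd β hβ)
        rw [varsSum_cons, add_assoc]
        exact le_trans (self_le_add_left _ _) (self_le_add_left _ _)
      obtain ⟨hsuppB, hbound⟩ :=
        redL_key deg lam B H ρ hdeg hredgrad hH hρ hredfam hlead L q hq hdl
      rw [keyeq]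
      refine Submodule.add_mem _ (ih (c + Finsupp.single i 1) q hq ?_)
        (RL_defect deg lam B H ρ hH c ?_)
      · intro β hβ
        have := hd β hβ
        simp only [varsSum_cons, hdeg, add_assoc] at this ⊢
        exact this
      · intro γ hγ
        by_cases hBm : Finsupp.single i 1 + γ ∈ B
        · exact Or.inl hBm
        · obtain ⟨β, hβ, hdγ⟩ := hbound γ hγ
          have hγB : γ ∈ B := hsuppB hγ
          have hbor : Finsupp.single i 1 + γ ∈ border B :=
            ⟨Or.inr (Set.mem_iUnion.mpr ⟨i, ⟨γ, hγB, rfl⟩⟩), hBm⟩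
          have hdγ' : deg γ ≤ deg (varsSum L) + deg β := by rwa [hdeg] at hdγ
          have hdc : deg (c + (Finsupp.single i 1 + γ)) ≤ lam := by
            have h2 := hd β hβ
            simp only [varsSum_cons, hdeg, add_assoc] at h2 ⊢
            exact le_trans (add_le_add_right (add_le_add_right hdγ' _) _) h2
          have hlam2 : deg (Finsupp.single i 1 + γ) ≤ lam :=
            le_trans (deg_mono deg hredgrad (self_le_add_left _ _)) hdc
          exact Or.inr ⟨hredfam _ hbor hlam2, hdc⟩

lemma NF_sub (hdeg : ∀ a b : Mon n, deg (a + b) = deg a + deg b)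
    (hredgrad : ∀ a b : Mon n, a ≤ b → a ≠ b → deg a < deg b)
    (hB0 : (0 : Mon n) ∈ B)
    (hH : H ⊆ border B) (hρ : ∀ h ∈ H, ↑(ρ h).support ⊆ B)
    (hredfam : ∀ m ∈ border B, deg m ≤ lam → m ∈ H)
    (hlead : ∀ h ∈ H, ∀ m ∈ (ρ h).support, deg m ≤ deg h)
    {m : Mon n} (hml : deg m ≤ lam) :
    monomial m (1 : K) - NF B H ρ m ∈ Fspan K deg lam H ρ := by
  have := redL_defect deg lam B H ρ hdeg hredgrad hH hρ hredfam hlead (toL m) 0 1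
    (supp_one_cond B hB0)
    (fun β hβ => by rw [mem_supp_one hβ, add_zero, varsSum_toL, zero_add]; exact hml)
  rw [monomial_zero', C_1, one_mul, varsSum_toL, mul_one] at this
  exact this

lemma mem_spanMon {p : MvPolynomial (Fin n) K} :
    p ∈ spanMon K B ↔ ↑p.support ⊆ B := by
  constructor
  · intro hp
    let S : Submodule K (MvPolynomial (Fin n) K) :=
      { carrier := {q | ↑q.support ⊆ B}
        add_mem' := by
          intro a b ha hb γ hγ
          rcases Finset.mem_union.mp (MvPolynomial.support_add hγ) with h | h
          · exact ha h
          · exact hb h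
        zero_mem' := by simp
        smul_mem' := by
          intro c a ha γ hγ
          exact ha (MvPolynomial.support_smul hγ) }
    have hle : spanMon K B ≤ S := by
      rw [spanMon, Submodule.span_le]
      rintro q ⟨m, hm, rfl⟩
      show ↑(monomial m (1 : K)).support ⊆ B
      rw [support_monomial, if_neg (one_ne_zero (α := K))]
      intro γ hγ
      rw [Finset.coe_singleton, Set.mem_singleton_iff] at hγ
      subst hγ; exact hm
    exact hle hp
  · intro h
    rw [as_sum p]
    refine Submodule.sum_mem _ fun m hm => ?_
    rw [← smul_mono_one m (coeff m p)]
    exact Submodule.smul_mem _ _ (Submodule.subset_span ⟨m, h hm, rfl⟩)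

end Main2

section Main3

variable {n : ℕ} {K : Type} [Field K] {Λ : Type} [AddCommMonoid Λ] [LinearOrder Λ] [IsOrderedAddMonoid Λ]
variable (deg : Mon n → Λ) (lam : Λ) (B H : Set (Mon n)) (ρ : Mon n → MvPolynomial (Fin n) K)

lemma sub_liftMon (G : Mon n → MvPolynomial (Fin n) K) (p : MvPolynomial (Fin n) K) :
    p - liftMon G p = ∑ m ∈ p.support, coeff m p • (monomial m (1 : K) - G m) := by
  rw [liftMon_apply]
  have h2 : ∑ m ∈ p.support, coeff m p • (monomial m (1 : K) - G m)
      = ∑ m ∈ p.support, (monomial m (coeff m p) - coeff m p • G m) :=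
    Finset.sum_congr rfl fun m _ => by rw [smul_sub, smul_mono_one]
  rw [h2, Finset.sum_sub_distrib]
  congr 1
  exact as_sum p

lemma E_fix (hdeg : ∀ a b : Mon n, deg (a + b) = deg a + deg b)
    (hredgrad : ∀ a b : Mon n, a ≤ b → a ≠ b → deg a < deg b)
    (hB : ConnectedTo1 B)
    (hH : H ⊆ border B) (hρ : ∀ h ∈ H, ↑(ρ h).support ⊆ B)
    (hredfam : ∀ m ∈ border B, deg m ≤ lam → m ∈ H)
    (hlead : ∀ h ∈ H, ∀ m ∈ (ρ h).support, deg m ≤ deg h)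
    (hcomm : ∀ m ∈ B, ∀ i j : Fin n,
      deg (Finsupp.single i 1 + (Finsupp.single j 1 + m)) ≤ lam →
      piF B H ρ (X i * piF B H ρ (X j * monomial m (1 : K))) =
      piF B H ρ (X j * piF B H ρ (X i * monomial m (1 : K))))
    {b : MvPolynomial (Fin n) K} (hs : ↑b.support ⊆ B)
    (hdb : ∀ m ∈ b.support, deg m ≤ lam) :
    liftMon (NF B H ρ) b = b := by
  conv_rhs => rw [as_sum b]
  rw [liftMon_apply]
  refine Finset.sum_congr rfl fun m hm => ?_
  rw [NF_B deg lam B H ρ hdeg hredgrad hB hH hρ hredfam hlead hcomm (hs hm) (hdb m hm),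
    smul_mono_one]

lemma E_mul_mon (hdeg : ∀ a b : Mon n, deg (a + b) = deg a + deg b)
    (hredgrad : ∀ a b : Mon n, a ≤ b → a ≠ b → deg a < deg b)
    (hB : ConnectedTo1 B)
    (hH : H ⊆ border B) (hρ : ∀ h ∈ H, ↑(ρ h).support ⊆ B)
    (hredfam : ∀ m ∈ border B, deg m ≤ lam → m ∈ H)
    (hlead : ∀ h ∈ H, ∀ m ∈ (ρ h).support, deg m ≤ deg h)
    (hcomm : ∀ m ∈ B, ∀ i j : Fin n,
      deg (Finsupp.single i 1 + (Finsupp.single j 1 + m)) ≤ lam →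
      piF B H ρ (X i * piF B H ρ (X j * monomial m (1 : K))) =
      piF B H ρ (X j * piF B H ρ (X i * monomial m (1 : K))))
    (α : Mon n) {r : MvPolynomial (Fin n) K} (hr : ↑r.support ⊆ B)
    (hd : ∀ γ ∈ r.support, deg (α + γ) ≤ lam) :
    liftMon (NF B H ρ) (monomial α 1 * r) = redL B H ρ (toL α) r := by
  conv_lhs => rw [as_sum r]
  conv_rhs => rw [as_sum r]
  rw [Finset.mul_sum, map_sum, map_sum]
  refine Finset.sum_congr rfl fun γ hγ => ?_
  rw [monomial_mul, one_mul, liftMon_monomial, ← smul_mono_one γ (coeff γ r), map_smul]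
  congr 1
  obtain ⟨Lγ, hLγ, hpre⟩ := hB.2 γ (hr hγ)
  have hconn := redL_conn B H ρ Lγ hpre
  have hperm : (toL (α + γ)).Perm (toL α ++ Lγ.reverse) := by
    refine perm_of_varsSum_eq ?_
    rw [varsSum_toL, varsSum_append, varsSum_toL, varsSum_perm (List.reverse_perm Lγ), hLγ]
  have h2 := redL_perm deg lam B H ρ hdeg hredgrad hH hρ hredfam hlead hcomm hperm
    (1 : MvPolynomial (Fin n) K) (supp_one_cond B hB.1)
    (fun β hβ => by rw [mem_supp_one hβ, add_zero, varsSum_toL]; exact hd γ hγ)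
  rw [NF, h2, redL_append, hconn, hLγ]

lemma E_gen_zero (hdeg : ∀ a b : Mon n, deg (a + b) = deg a + deg b)
    (hredgrad : ∀ a b : Mon n, a ≤ b → a ≠ b → deg a < deg b)
    (hB : ConnectedTo1 B)
    (hH : H ⊆ border B) (hρ : ∀ h ∈ H, ↑(ρ h).support ⊆ B)
    (hredfam : ∀ m ∈ border B, deg m ≤ lam → m ∈ H)
    (hlead : ∀ h ∈ H, ∀ m ∈ (ρ h).support, deg m ≤ deg h)
    (hcomm : ∀ m ∈ B, ∀ i j : Fin n,
      deg (Finsupp.single i 1 + (Finsupp.single j 1 + m)) ≤ lam →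
      piF B H ρ (X i * piF B H ρ (X j * monomial m (1 : K))) =
      piF B H ρ (X j * piF B H ρ (X i * monomial m (1 : K))))
    {α h : Mon n} (hh : h ∈ H) (hdl : deg (α + h) ≤ lam) :
    liftMon (NF B H ρ) (monomial α (1 : K) * (monomial h 1 - ρ h)) = 0 := by
  rw [mul_sub, map_sub, monomial_mul, one_mul, liftMon_monomial, one_smul]
  have hEρ : liftMon (NF B H ρ) (monomial α 1 * ρ h) = redL B H ρ (toL α) (ρ h) :=
    E_mul_mon deg lam B H ρ hdeg hredgrad hB hH hρ hredfam hlead hcomm α (hρ h hh)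
      (fun γ hγ => by
        calc deg (α + γ) = deg α + deg γ := hdeg _ _
          _ ≤ deg α + deg h := add_le_add_right (hlead h hh γ hγ) _
          _ = deg (α + h) := (hdeg _ _).symm
          _ ≤ lam := hdl)
  rw [hEρ]
  have hbor : h ∈ border B := hH hh
  have hnB : h ∉ B := hbor.2
  obtain ⟨j, β, hβB, hhe⟩ : ∃ j β, β ∈ B ∧ h = Finsupp.single j 1 + β := by
    rcases hbor.1 with hc | hc
    · exact absurd hc hnB
    · obtain ⟨j, hj⟩ := Set.mem_iUnion.mp hc
      obtain ⟨β, hβ, hhe⟩ := hj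
      exact ⟨j, β, hβ, hhe.symm⟩
  obtain ⟨Lβ, hLβ, hpre⟩ := hB.2 β hβB
  have hperm : (toL (α + h)).Perm (toL α ++ (j :: Lβ.reverse)) := by
    refine perm_of_varsSum_eq ?_
    rw [varsSum_toL, varsSum_append, varsSum_toL, varsSum_cons,
      varsSum_perm (List.reverse_perm Lβ), hLβ, ← hhe]
  have h2 := redL_perm deg lam B H ρ hdeg hredgrad hH hρ hredfam hlead hcomm hperm
    (1 : MvPolynomial (Fin n) K) (supp_one_cond B hB.1)
    (fun b hb => by rw [mem_supp_one hb, add_zero, varsSum_toL]; exact hdl)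
  have h3 : redL B H ρ (j :: Lβ.reverse) (1 : MvPolynomial (Fin n) K) = ρ h := by
    rw [redL_cons, redL_conn B H ρ Lβ hpre, hLβ, RL_monomial, one_smul, ← hhe]
    simp only [gfun, if_neg hnB, if_pos hh]
  rw [NF, h2, redL_append, h3, sub_self]

lemma E_Fspan_zero (hdeg : ∀ a b : Mon n, deg (a + b) = deg a + deg b)
    (hredgrad : ∀ a b : Mon n, a ≤ b → a ≠ b → deg a < deg b)
    (hB : ConnectedTo1 B)
    (hH : H ⊆ border B) (hρ : ∀ h ∈ H, ↑(ρ h).support ⊆ B)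
    (hredfam : ∀ m ∈ border B, deg m ≤ lam → m ∈ H)
    (hlead : ∀ h ∈ H, ∀ m ∈ (ρ h).support, deg m ≤ deg h)
    (hcomm : ∀ m ∈ B, ∀ i j : Fin n,
      deg (Finsupp.single i 1 + (Finsupp.single j 1 + m)) ≤ lam →
      piF B H ρ (X i * piF B H ρ (X j * monomial m (1 : K))) =
      piF B H ρ (X j * piF B H ρ (X i * monomial m (1 : K))))
    {q : MvPolynomial (Fin n) K} (hq : q ∈ Fspan K deg lam H ρ) :
    liftMon (NF B H ρ) q = 0 := by
  have hker : Fspan K deg lam H ρ ≤ LinearMap.ker (liftMon (NF B H ρ)) := by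
    rw [Fspan, Submodule.span_le]
    rintro w ⟨α, h, hh, hdl, rfl⟩
    exact LinearMap.mem_ker.mpr
      (E_gen_zero deg lam B H ρ hdeg hredgrad hB hH hρ hredfam hlead hcomm hh hdl)
  exact LinearMap.mem_ker.mp (hker hq)

end Main3

/-- if the truncated multiplication operators commute, π_F extends to a
    projection of K[x]_λ onto ⟨B⟩_λ with kernel F_⟨λ⟩; in particular
    K[x]_λ = ⟨B⟩_λ ⊕ F_⟨λ⟩ (unique decomposition). -/
theorem stmt8 {n : ℕ} {K : Type} [Field K] {Λ : Type} [AddCommMonoid Λ] [LinearOrder Λ] [IsOrderedAddMonoid Λ]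
    (deg : Mon n → Λ)
    (hdeg : ∀ a b : Mon n, deg (a + b) = deg a + deg b)
    (hredgrad : ∀ a b : Mon n, a ≤ b → a ≠ b → deg a < deg b)
    (B H : Set (Mon n)) (ρ : Mon n → MvPolynomial (Fin n) K) (lam : Λ)
    (hB : ConnectedTo1 B) (hH : H ⊆ border B)
    (hρ : ∀ h ∈ H, ↑(ρ h).support ⊆ B)
    (hredfam : ∀ m ∈ border B, deg m ≤ lam → m ∈ H)
    (hlead : ∀ h ∈ H, ∀ m ∈ (ρ h).support, deg m ≤ deg h)
    (hcomm : ∀ m ∈ B, ∀ i j : Fin n,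
      deg (Finsupp.single i 1 + (Finsupp.single j 1 + m)) ≤ lam →
      piF B H ρ (X i * piF B H ρ (X j * monomial m (1 : K))) =
      piF B H ρ (X j * piF B H ρ (X i * monomial m (1 : K)))) :
    (∀ p : MvPolynomial (Fin n) K, (∀ m ∈ p.support, deg m ≤ lam) →
      ↑p.support ⊆ prolong B →
      piF B H ρ p ∈ spanMon K B ∧ p - piF B H ρ p ∈ Fspan K deg lam H ρ) ∧
    (∀ p : MvPolynomial (Fin n) K, (∀ m ∈ p.support, deg m ≤ lam) →
      ∃! bq : MvPolynomial (Fin n) K × MvPolynomial (Fin n) K,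
        bq.1 ∈ spanMon K B ∧ (∀ m ∈ bq.1.support, deg m ≤ lam) ∧
        bq.2 ∈ Fspan K deg lam H ρ ∧ p = bq.1 + bq.2) := by
  have hB0 : (0 : Mon n) ∈ B := hB.1
  constructor
  · intro p hdegp hsupp
    constructor
    · rw [piF_eq, liftMon_apply]
      refine Submodule.sum_mem _ fun m hm => Submodule.smul_mem _ _ ?_
      have hmP : m ∈ prolong B := hsupp hm
      by_cases hmB : m ∈ B
      · simp only [gfun, if_pos hmB]
        exact Submodule.subset_span ⟨m, hmB, rfl⟩
      · have hHm : m ∈ H := hredfam m ⟨hmP, hmB⟩ (hdegp m hm)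
        simp only [gfun, if_neg hmB, if_pos hHm]
        exact (mem_spanMon B).mpr (hρ m hHm)
    · rw [piF_eq, sub_liftMon]
      refine Submodule.sum_mem _ fun m hm => Submodule.smul_mem _ _ ?_
      by_cases hmB : m ∈ B
      · simp only [gfun, if_pos hmB, sub_self]
        exact Submodule.zero_mem _
      · have hHm : m ∈ H := hredfam m ⟨hsupp hm, hmB⟩ (hdegp m hm)
        simp only [gfun, if_neg hmB, if_pos hHm]
        refine Submodule.subset_span ⟨0, m, hHm, ?_, ?_⟩
        · rw [zero_add]; exact hdegp m hm
        · rw [monomial_zero', C_1, one_mul]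
  · intro p hdegp
    refine ⟨(liftMon (NF B H ρ) p, p - liftMon (NF B H ρ) p), ⟨?_, ?_, ?_, by ring⟩, ?_⟩
    · rw [mem_spanMon B]
      intro γ hγ
      obtain ⟨m, hm, hγ'⟩ := liftMon_supp (NF B H ρ) p hγ
      exact (NF_key deg lam B H ρ hdeg hredgrad hB0 hH hρ hredfam hlead (hdegp m hm)).1 hγ'
    · intro m hm
      obtain ⟨m', hm', hγ'⟩ := liftMon_supp (NF B H ρ) p hm
      exact le_trans
        ((NF_key deg lam B H ρ hdeg hredgrad hB0 hH hρ hredfam hlead (hdegp m' hm')).2 m hγ')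
        (hdegp m' hm')
    · rw [sub_liftMon]
      refine Submodule.sum_mem _ fun m hm => Submodule.smul_mem _ _ ?_
      exact NF_sub deg lam B H ρ hdeg hredgrad hB0 hH hρ hredfam hlead (hdegp m hm)
    · rintro ⟨b, q⟩ ⟨hbspan, hbdeg, hqF, hpeq⟩
      have hEb : liftMon (NF B H ρ) b = b :=
        E_fix deg lam B H ρ hdeg hredgrad hB hH hρ hredfam hlead hcomm
          ((mem_spanMon B).mp hbspan) hbdeg
      have hEq : liftMon (NF B H ρ) q = 0 :=
        E_Fspan_zero deg lam B H ρ hdeg hredgrad hB hH hρ hredfam hlead hcomm hqF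
      have hEp : liftMon (NF B H ρ) p = b := by rw [hpeq, map_add, hEb, hEq, add_zero]
      have hq2 : q = p - liftMon (NF B H ρ) p := by rw [hEp, hpeq]; ring
      rw [Prod.mk.injEq]
      exact ⟨hEp.symm, hq2⟩
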